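/- Let f ∈ ℤ[x] be nonconstant, let ρ ∈ ℚ be a root bound for f (i.e. every complex root α of f satisfies |α| ≤ ρ), and let Δ ≥ 1 be a factor degree lower bound for f (i.e. in every factorization f = g·h with g, h ∈ ℤ[x] both nonconstant, one has deg g ≥ Δ and deg h ≥ Δ). Suppose there exists n ∈ ℤ with |n| > 1 + ρ such that |f(n)| = s·p, where p is a prime number and s is a positive integer with s < (|n| − ρ)^Δ. Then f admits no factorization f = g·h with g, h ∈ ℤ[x] both nonconstant; equivalently, f is irreducible in ℚ[x]. -/

import Mathlib

open Polynomial

private lemma aux_prod_lb (c : ℝ) (hc : 0 ≤ c) (s : Multiset ℝ)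
    (h : ∀ x ∈ s, c ≤ x) : c ^ Multiset.card s ≤ s.prod := by
  induction s using Multiset.induction with
  | empty => simp
  | cons a t ih =>
    have ha := h a (Multiset.mem_cons_self a t)
    have ht := ih (fun x hx => h x (Multiset.mem_cons_of_mem hx))
    have htn : (0:ℝ) ≤ t.prod :=
      Multiset.prod_nonneg (fun x hx => le_trans hc (h x (Multiset.mem_cons_of_mem hx)))
    simp only [Multiset.card_cons, Multiset.prod_cons, pow_succ']
    calc c * c ^ Multiset.card t ≤ a * t.prod :=
          mul_le_mul ha ht (pow_nonneg hc _) (le_trans hc ha)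

private lemma eval_lower_bound (g : Polynomial ℤ) (hg : g ≠ 0) (ρ : ℝ) (n : ℤ)
    (hroots : ∀ α : ℂ, Polynomial.aeval α g = 0 → ‖α‖ ≤ ρ)
    (hnρ : 0 ≤ ((|n| : ℤ) : ℝ) - ρ) :
    (((|n| : ℤ) : ℝ) - ρ) ^ g.natDegree ≤ ((|g.eval n| : ℤ) : ℝ) := by
  set G : Polynomial ℂ := g.map (Int.castRingHom ℂ) with hGdef
  have hinj : Function.Injective (Int.castRingHom ℂ) := Int.cast_injective
  have hG0 : G ≠ 0 := (Polynomial.map_ne_zero_iff hinj).mpr hg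
  have hsplit : Splits G := IsAlgClosed.splits G
  have heq := hsplit.eq_prod_roots
  have hcard : Multiset.card G.roots = g.natDegree := by
    rw [splits_iff_card_roots.mp hsplit, hGdef, natDegree_map_eq_of_injective hinj]
  -- value of G at n
  have hGeval : G.eval (n : ℂ) = ((g.eval n : ℤ) : ℂ) := by
    rw [hGdef, eval_intCast_map]; rfl
  have habs : ‖G.eval (n : ℂ)‖ = ((|g.eval n| : ℤ) : ℝ) := by
    rw [hGeval, Complex.norm_intCast, Int.cast_abs]
  -- root bound for each root of G
  have hroot' : ∀ α ∈ G.roots, ((|n| : ℤ) : ℝ) - ρ ≤ ‖(n : ℂ) - α‖ := by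
    intro α hα
    have h1 : Polynomial.aeval α g = 0 := by
      have := (mem_roots hG0).mp hα
      rwa [Polynomial.aeval_def, ← eval_map]
    have h2 := hroots α h1
    have h3 : ‖(n : ℂ)‖ = ((|n| : ℤ) : ℝ) := by
      rw [Complex.norm_intCast, Int.cast_abs]
    calc ((|n| : ℤ) : ℝ) - ρ ≤ ‖(n : ℂ)‖ - ‖α‖ := by
          rw [h3]; linarith
      _ ≤ ‖(n : ℂ) - α‖ := by
          have h4 := norm_add_le ((n : ℂ) - α) α
          simp only [sub_add_cancel] at h4
          linarith
  -- leading coefficient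
  have hlead : 1 ≤ ‖G.leadingCoeff‖ := by
    have : G.leadingCoeff = ((g.leadingCoeff : ℤ) : ℂ) := leadingCoeff_map_of_injective hinj g
    rw [this, Complex.norm_intCast]
    have : g.leadingCoeff ≠ 0 := leadingCoeff_ne_zero.mpr hg
    have h1 : 1 ≤ |g.leadingCoeff| := Int.one_le_abs (by exact_mod_cast this)
    calc (1:ℝ) ≤ ((|g.leadingCoeff| : ℤ) : ℝ) := by exact_mod_cast h1
      _ = |((g.leadingCoeff : ℤ) : ℝ)| := by rw [Int.cast_abs]
  -- compute abs of product
  have habs2 : ‖G.eval (n : ℂ)‖ =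
      ‖G.leadingCoeff‖ *
        (G.roots.map (fun α => ‖(n : ℂ) - α‖)).prod := by
    conv_lhs => rw [heq]
    rw [eval_mul, eval_C, norm_mul, eval_multiset_prod, Multiset.map_map,
      show ∀ m : Multiset ℂ, ‖m.prod‖ = (m.map (‖·‖)).prod from
        fun m => map_multiset_prod (normHom (α := ℂ)) m, Multiset.map_map]
    simp [Function.comp]
  have hprod : (((|n| : ℤ) : ℝ) - ρ) ^ g.natDegree ≤
      (G.roots.map (fun α => ‖(n : ℂ) - α‖)).prod := by
    have := aux_prod_lb (((|n| : ℤ) : ℝ) - ρ) hnρ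
      (G.roots.map (fun α => ‖(n : ℂ) - α‖))
      (by intro x hx
          obtain ⟨α, hα, rfl⟩ := Multiset.mem_map.mp hx
          exact hroot' α hα)
    rwa [Multiset.card_map, hcard] at this
  have hprodnn : (0:ℝ) ≤ (G.roots.map (fun α => ‖(n : ℂ) - α‖)).prod :=
    Multiset.prod_nonneg (by
      intro x hx
      obtain ⟨α, hα, rfl⟩ := Multiset.mem_map.mp hx
      exact norm_nonneg _)
  calc (((|n| : ℤ) : ℝ) - ρ) ^ g.natDegree
      ≤ (G.roots.map (fun α => ‖(n : ℂ) - α‖)).prod := hprod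
    _ ≤ ‖G.leadingCoeff‖ *
        (G.roots.map (fun α => ‖(n : ℂ) - α‖)).prod := by nlinarith
    _ = ((|g.eval n| : ℤ) : ℝ) := by rw [← habs2, habs]

/-- **Large prime factor witness criterion.**
If `f ∈ ℤ[x]` is nonconstant, `ρ` is a root bound, `Δ` a factor degree lower bound,
and `|f(n)| = s * p` with `p` prime and `0 < s < (|n| - ρ)^Δ` for some `n` with
`|n| > 1 + ρ`, then `f` has no factorization into two nonconstant integer polynomials;
equivalently `f` is irreducible in `ℚ[x]`. -/
theorem stmt0 (f : Polynomial ℤ) (hf : 1 ≤ f.natDegree)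
    (ρ : ℚ) (hρ : ∀ α : ℂ, Polynomial.aeval α f = 0 → ‖α‖ ≤ (ρ : ℝ))
    (Δ : ℕ) (hΔ1 : 1 ≤ Δ)
    (hΔ : ∀ g h : Polynomial ℤ, f = g * h → 1 ≤ g.natDegree → 1 ≤ h.natDegree →
      Δ ≤ g.natDegree ∧ Δ ≤ h.natDegree)
    (n : ℤ) (hn : ((|n| : ℤ) : ℚ) > 1 + ρ)
    (s : ℤ) (hs : 0 < s) (p : ℕ) (hp : Nat.Prime p)
    (hval : |f.eval n| = s * (p : ℤ))
    (hsmall : (s : ℚ) < (((|n| : ℤ) : ℚ) - ρ) ^ Δ) :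
    (∀ g h : Polynomial ℤ, f = g * h → g.natDegree = 0 ∨ h.natDegree = 0) ∧
      Irreducible (f.map (Int.castRingHom ℚ)) := by
  have hf0 : f ≠ 0 := fun h0 => by simp [h0] at hf
  have hnR : (1:ℝ) + ρ < ((|n| : ℤ) : ℝ) := by exact_mod_cast hn
  have hR1 : (1:ℝ) < ((|n| : ℤ) : ℝ) - (ρ:ℝ) := by linarith
  have hsmallR : (s : ℝ) < (((|n| : ℤ) : ℝ) - (ρ:ℝ)) ^ Δ := by exact_mod_cast hsmall
  -- Part 1
  have part1 : ∀ g h : Polynomial ℤ, f = g * h → g.natDegree = 0 ∨ h.natDegree = 0 := by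
    intro g h hfe
    by_contra hc
    push_neg at hc
    obtain ⟨hg0, hh0⟩ := hc
    have hg1 : 1 ≤ g.natDegree := Nat.one_le_iff_ne_zero.mpr hg0
    have hh1 : 1 ≤ h.natDegree := Nat.one_le_iff_ne_zero.mpr hh0
    obtain ⟨hΔg, hΔh⟩ := hΔ g h hfe hg1 hh1
    have hgne : g ≠ 0 := fun h0 => hf0 (by rw [hfe, h0, zero_mul])
    have hhne : h ≠ 0 := fun h0 => hf0 (by rw [hfe, h0, mul_zero])
    have hρg : ∀ α : ℂ, Polynomial.aeval α g = 0 → ‖α‖ ≤ (ρ:ℝ) := by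
      intro α hα; exact hρ α (by rw [hfe, map_mul, hα, zero_mul])
    have hρh : ∀ α : ℂ, Polynomial.aeval α h = 0 → ‖α‖ ≤ (ρ:ℝ) := by
      intro α hα; exact hρ α (by rw [hfe, map_mul, hα, mul_zero])
    have hbg := eval_lower_bound g hgne (ρ:ℝ) n hρg (by linarith)
    have hbh := eval_lower_bound h hhne (ρ:ℝ) n hρh (by linarith)
    have hpowg : (((|n| : ℤ) : ℝ) - (ρ:ℝ)) ^ Δ ≤ (((|n| : ℤ) : ℝ) - (ρ:ℝ)) ^ g.natDegree :=
      pow_le_pow_right₀ hR1.le hΔg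
    have hpowh : (((|n| : ℤ) : ℝ) - (ρ:ℝ)) ^ Δ ≤ (((|n| : ℤ) : ℝ) - (ρ:ℝ)) ^ h.natDegree :=
      pow_le_pow_right₀ hR1.le hΔh
    have hsa : s < |g.eval n| := by
      have : (s:ℝ) < ((|g.eval n| : ℤ) : ℝ) := by linarith
      exact_mod_cast this
    have hsb : s < |h.eval n| := by
      have : (s:ℝ) < ((|h.eval n| : ℤ) : ℝ) := by linarith
      exact_mod_cast this
    have hab : |g.eval n| * |h.eval n| = s * (p:ℤ) := by
      rw [← abs_mul, ← eval_mul, ← hfe, hval]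
    have hpZ : Prime ((p:ℕ) : ℤ) := Nat.prime_iff_prime_int.mp hp
    have hpd : ((p:ℕ) : ℤ) ∣ |g.eval n| * |h.eval n| := ⟨s, by linarith⟩
    have hp2 : (2:ℤ) ≤ (p:ℤ) := by exact_mod_cast hp.two_le
    rcases hpZ.2.2 _ _ hpd with hpa | hpa
    · have hap : (p:ℤ) ≤ |g.eval n| := Int.le_of_dvd (by linarith) hpa
      nlinarith
    · have hap : (p:ℤ) ≤ |h.eval n| := Int.le_of_dvd (by linarith) hpa
      nlinarith
  refine ⟨part1, ?_⟩
  -- Part 2: irreducibility over ℚ via the primitive part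
  have hc0 : f.content ≠ 0 := fun h0 => hf0 (content_eq_zero_iff.mp h0)
  have hfdecomp := f.eq_C_content_mul_primPart
  have hprim : f.primPart.IsPrimitive := f.isPrimitive_primPart
  have hpdeg : f.primPart.natDegree = f.natDegree := f.natDegree_primPart
  have hirr : Irreducible f.primPart := by
    constructor
    · intro hu
      have := natDegree_eq_zero_of_isUnit hu
      omega
    · intro a b hab
      have hfab : f = (C f.content * a) * b := by
        conv_lhs => rw [hfdecomp, hab]
        rw [mul_assoc]
      rcases part1 _ _ hfab with h1 | h1
      · left
        have ha0 : a.natDegree = 0 := by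
          have hCa : (C f.content).natDegree = 0 := natDegree_C _
          have hane : a ≠ 0 := left_ne_zero_of_mul (hab ▸ f.primPart_ne_zero)
          rw [natDegree_mul (by simpa using hc0) hane, hCa] at h1
          omega
        obtain ⟨r, rfl⟩ := natDegree_eq_zero.mp ha0
        exact isUnit_C.mpr (isPrimitive_iff_isUnit_of_C_dvd.mp hprim r ⟨b, hab⟩)
      · right
        obtain ⟨r, rfl⟩ := natDegree_eq_zero.mp h1
        exact isUnit_C.mpr (isPrimitive_iff_isUnit_of_C_dvd.mp hprim r ⟨a, by rw [hab, mul_comm]⟩)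
  have hirrQ : Irreducible (f.primPart.map (Int.castRingHom ℚ)) :=
    (Polynomial.IsPrimitive.Int.irreducible_iff_irreducible_map_cast hprim).mp hirr
  have hassoc : Associated (f.primPart.map (Int.castRingHom ℚ)) (f.map (Int.castRingHom ℚ)) := by
    have : f.map (Int.castRingHom ℚ) =
        C ((f.content : ℤ) : ℚ) * f.primPart.map (Int.castRingHom ℚ) := by
      conv_lhs => rw [hfdecomp]
      rw [Polynomial.map_mul, map_C]; rfl
    have hu : IsUnit (C ((f.content : ℤ) : ℚ)) :=
      isUnit_C.mpr (isUnit_iff_ne_zero.mpr (by exact_mod_cast hc0))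
    obtain ⟨u, hu⟩ := hu
    exact ⟨u, by rw [hu, this]; ring⟩
  exact hassoc.irreducible hirrQ
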